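/- Let 𝒜 = {A₁, A₂, A₃, A₄} be a 4-cover of ℝ, let F be a subset of A₃ whose closure in 𝕊← is contained in A₂ ∪ A₃, and let q ∈ ℚ. Then the family 𝒰 = {[x, q) : x ∈ F, x < q} is an interior-preserving family of open sets in the hybrid space H₄(𝒜): each member of 𝒰 is open in H₄(𝒜) and the intersection of every nonempty subfamily of 𝒰 is open in H₄(𝒜). -/

import Mathlib

open Set

/-- The Sorgenfrey topology on ℝ (generated by the intervals `[a, b)`). -/
def sorgenfreyTop : TopologicalSpace ℝ :=
  TopologicalSpace.generateFrom {S : Set ℝ | ∃ a b : ℝ, S = Set.Ico a b}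

/-- The "left" Sorgenfrey topology on ℝ (generated by the intervals `(a, b]`). -/
def sorgenfreyLeftTop : TopologicalSpace ℝ :=
  TopologicalSpace.generateFrom {S : Set ℝ | ∃ a b : ℝ, S = Set.Ioc a b}

/-- `A₁, A₂, A₃, A₄` form a 4-cover of ℝ: pairwise disjoint with union ℝ. -/
def Is4Cover (A₁ A₂ A₃ A₄ : Set ℝ) : Prop :=
  A₁ ∪ A₂ ∪ A₃ ∪ A₄ = Set.univ ∧
  Disjoint A₁ A₂ ∧ Disjoint A₁ A₃ ∧ Disjoint A₁ A₄ ∧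
  Disjoint A₂ A₃ ∧ Disjoint A₂ A₄ ∧ Disjoint A₃ A₄

/-- The hybrid topology determined by a 4-cover: points of `A₁` have the usual
open intervals as a local base, points of `A₂` are isolated, points of `A₃`
have a local base of sets `[x, x+ε)`, and points of `A₄` of sets `(x-ε, x]`. -/
def hybridTop (A₁ A₂ A₃ A₄ : Set ℝ) : TopologicalSpace ℝ :=
  TopologicalSpace.generateFrom
    ({S : Set ℝ | ∃ x ∈ A₁, ∃ ε : ℝ, 0 < ε ∧ S = Set.Ioo (x - ε) (x + ε)} ∪
     {S : Set ℝ | ∃ x ∈ A₂, S = {x}} ∪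
     {S : Set ℝ | ∃ x ∈ A₃, ∃ ε : ℝ, 0 < ε ∧ S = Set.Ico x (x + ε)} ∪
     {S : Set ℝ | ∃ x ∈ A₄, ∃ ε : ℝ, 0 < ε ∧ S = Set.Ioc (x - ε) x})

/-- A quasi-metric: nonnegative, vanishing exactly on the diagonal,
satisfying the triangle inequality. -/
def IsQuasiMetric {X : Type*} (ρ : X → X → ℝ) : Prop :=
  (∀ x y, 0 ≤ ρ x y) ∧ (∀ x y, ρ x y = 0 ↔ x = y) ∧
  (∀ x y z, ρ x y ≤ ρ x z + ρ z y)

/-- A non-archimedean quasi-metric. -/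
def IsNAQuasiMetric {X : Type*} (ρ : X → X → ℝ) : Prop :=
  IsQuasiMetric ρ ∧ ∀ x y z, ρ x y ≤ max (ρ x z) (ρ z y)

/-- The topology induced by a quasi-metric: the balls `B_ρ(x, r)` form a base. -/
def quasiMetricTop {X : Type*} (ρ : X → X → ℝ) : TopologicalSpace X :=
  TopologicalSpace.generateFrom
    {B : Set X | ∃ x : X, ∃ r : ℝ, 0 < r ∧ B = {y : X | ρ x y < r}}

/-- A topology is quasi-metrizable if it is induced by some quasi-metric. -/
def QuasiMetrizableTop {X : Type*} (t : TopologicalSpace X) : Prop :=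
  ∃ ρ : X → X → ℝ, IsQuasiMetric ρ ∧ t = quasiMetricTop ρ

/-- A topology is non-archimedeanly quasi-metrizable if it is induced by some
non-archimedean quasi-metric. -/
def NAQuasiMetrizableTop {X : Type*} (t : TopologicalSpace X) : Prop :=
  ∃ ρ : X → X → ℝ, IsNAQuasiMetric ρ ∧ t = quasiMetricTop ρ

lemma isOpen_generate_of_basic {X : Type*} {g : Set (Set X)} {S : Set X}
    (h : ∀ y ∈ S, ∃ B ∈ g, y ∈ B ∧ B ⊆ S) :
    @IsOpen X (TopologicalSpace.generateFrom g) S := by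
  have hS : S = ⋃₀ {B | B ∈ g ∧ B ⊆ S} := by
    ext y
    constructor
    · intro hy
      obtain ⟨B, hBg, hyB, hBS⟩ := h y hy
      exact ⟨B, ⟨hBg, hBS⟩, hyB⟩
    · rintro ⟨B, ⟨_, hBS⟩, hyB⟩
      exact hBS hyB
  rw [hS]
  exact TopologicalSpace.GenerateOpen.sUnion _ (fun B hB => .basic B hB.1)

lemma sorgenfreyLeft_nhds {U : Set ℝ}
    (hU : TopologicalSpace.GenerateOpen {S : Set ℝ | ∃ a b : ℝ, S = Set.Ioc a b} U) :
    ∀ s ∈ U, ∃ a, a < s ∧ Set.Ioc a s ⊆ U := by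
  induction hU with
  | basic S hS =>
      obtain ⟨a, b, rfl⟩ := hS
      rintro s ⟨has, hsb⟩
      exact ⟨a, has, fun y hy => ⟨hy.1, hy.2.trans hsb⟩⟩
  | univ =>
      intro s _
      exact ⟨s - 1, by linarith, fun y _ => trivial⟩
  | inter S T _ _ ihS ihT =>
      rintro s ⟨hsS, hsT⟩
      obtain ⟨a, ha, haS⟩ := ihS s hsS
      obtain ⟨b, hb, hbT⟩ := ihT s hsT
      refine ⟨max a b, max_lt ha hb, fun y hy =>
        ⟨haS ⟨(le_max_left a b).trans_lt hy.1, hy.2⟩,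
         hbT ⟨(le_max_right a b).trans_lt hy.1, hy.2⟩⟩⟩
  | sUnion 𝒮 _ ih =>
      rintro s ⟨S, hS, hsS⟩
      obtain ⟨a, ha, h⟩ := ih S hS s hsS
      exact ⟨a, ha, fun y hy => ⟨S, hS, h hy⟩⟩

lemma hybrid_isOpen_Ico (A₁ A₂ A₃ A₄ : Set ℝ) (hcov : Is4Cover A₁ A₂ A₃ A₄)
    {s r : ℝ} (hs : s ∈ A₂ ∪ A₃) :
    @IsOpen ℝ (hybridTop A₁ A₂ A₃ A₄) (Set.Ico s r) := by
  apply isOpen_generate_of_basic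
  rintro y ⟨hsy, hyr⟩
  rcases eq_or_lt_of_le hsy with rfl | hlt
  · rcases hs with h2 | h3
    · refine ⟨{s}, ?_, rfl, ?_⟩
      · exact Or.inl (Or.inl (Or.inr ⟨s, h2, rfl⟩))
      · rintro z rfl
        exact ⟨le_refl _, hyr⟩
    · refine ⟨Set.Ico s (s + (r - s)), ?_, ⟨le_refl _, by linarith⟩, ?_⟩
      · exact Or.inl (Or.inr ⟨s, h3, r - s, by linarith, rfl⟩)
      · intro z hz
        exact ⟨hz.1, by linarith [hz.2]⟩
  · have hy : y ∈ A₁ ∪ A₂ ∪ A₃ ∪ A₄ := hcov.1 ▸ Set.mem_univ y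
    rcases hy with ((h1 | h2) | h3) | h4
    · set ε := min (y - s) (r - y) with hε
      have hε0 : 0 < ε := lt_min (by linarith) (by linarith)
      refine ⟨Set.Ioo (y - ε) (y + ε), ?_, ⟨by linarith, by linarith⟩, ?_⟩
      · exact Or.inl (Or.inl (Or.inl ⟨y, h1, ε, hε0, rfl⟩))
      · intro z hz
        have h1' : ε ≤ y - s := min_le_left _ _
        have h2' : ε ≤ r - y := min_le_right _ _
        exact ⟨by linarith [hz.1], by linarith [hz.2]⟩
    · refine ⟨{y}, Or.inl (Or.inl (Or.inr ⟨y, h2, rfl⟩)), rfl, ?_⟩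
      rintro z rfl
      exact ⟨hsy, hyr⟩
    · refine ⟨Set.Ico y (y + (r - y)), Or.inl (Or.inr ⟨y, h3, r - y, by linarith, rfl⟩),
        ⟨le_refl _, by linarith⟩, ?_⟩
      intro z hz
      exact ⟨le_trans hsy hz.1, by linarith [hz.2]⟩
    · refine ⟨Set.Ioc (y - (y - s)) y, Or.inr ⟨y, h4, y - s, by linarith, rfl⟩,
        ⟨by linarith, le_refl _⟩, ?_⟩
      intro z hz
      exact ⟨by linarith [hz.1], lt_of_le_of_lt hz.2 hyr⟩

/-- The family `{[x, q) : x ∈ F, x < q}`, where `F ⊆ A₃` has `𝕊←`-closure inside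
`A₂ ∪ A₃` and `q ∈ ℚ`, is an interior-preserving family of open sets in `H₄(𝒜)`. -/
theorem hybrid_interiorPreserving_Ico
    (A₁ A₂ A₃ A₄ : Set ℝ) (hcov : Is4Cover A₁ A₂ A₃ A₄)
    (F : Set ℝ) (hF : F ⊆ A₃) (hcl : @closure ℝ sorgenfreyLeftTop F ⊆ A₂ ∪ A₃) (q : ℚ) :
    (∀ S ∈ {S : Set ℝ | ∃ x ∈ F, x < (q : ℝ) ∧ S = Set.Ico x (q : ℝ)},
        @IsOpen ℝ (hybridTop A₁ A₂ A₃ A₄) S) ∧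
    (∀ V ⊆ {S : Set ℝ | ∃ x ∈ F, x < (q : ℝ) ∧ S = Set.Ico x (q : ℝ)},
        V.Nonempty → @IsOpen ℝ (hybridTop A₁ A₂ A₃ A₄) (⋂₀ V)) := by
  constructor
  · rintro S ⟨x, hxF, hxq, rfl⟩
    exact hybrid_isOpen_Ico A₁ A₂ A₃ A₄ hcov (Or.inr (hF hxF))
  · intro V hV ⟨S₀, hS₀⟩
    set T : Set ℝ := {x | x ∈ F ∧ x < (q : ℝ) ∧ Set.Ico x (q : ℝ) ∈ V} with hT
    have hTne : T.Nonempty := by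
      obtain ⟨x, hxF, hxq, rfl⟩ := hV hS₀
      exact ⟨x, hxF, hxq, hS₀⟩
    have hTbdd : BddAbove T := ⟨(q : ℝ), fun x hx => le_of_lt hx.2.1⟩
    set s := sSup T with hs
    have hsq : s ≤ (q : ℝ) := csSup_le hTne (fun x hx => le_of_lt hx.2.1)
    have hVeq : ⋂₀ V = Set.Ico s (q : ℝ) := by
      ext y
      constructor
      · intro hy
        refine ⟨csSup_le hTne (fun x hx => (hy _ hx.2.2).1), ?_⟩
        obtain ⟨x, hx⟩ := hTne
        exact (hy _ hx.2.2).2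
      · rintro ⟨hsy, hyq⟩ S hSV
        obtain ⟨x, hxF, hxq, rfl⟩ := hV hSV
        exact ⟨le_trans (le_csSup hTbdd ⟨hxF, hxq, hSV⟩) hsy, hyq⟩
    rw [hVeq]
    rcases lt_or_ge s (q : ℝ) with hlt | hge
    · -- s ∈ closure F in the left Sorgenfrey topology
      have hscl : s ∈ @closure ℝ sorgenfreyLeftTop F := by
        rw [@mem_closure_iff ℝ sorgenfreyLeftTop s F]
        intro O hO hsO
        obtain ⟨a, has, haO⟩ := sorgenfreyLeft_nhds hO s hsO
        obtain ⟨x, hxT, hax⟩ := exists_lt_of_lt_csSup hTne has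
        exact ⟨x, haO ⟨hax, le_csSup hTbdd hxT⟩, hxT.1⟩
      exact hybrid_isOpen_Ico A₁ A₂ A₃ A₄ hcov (hcl hscl)
    · rw [Set.Ico_eq_empty (not_lt.mpr hge)]
      exact @isOpen_empty ℝ (hybridTop A₁ A₂ A₃ A₄)
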